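/- Let ℓ : ℝⁿ → ℝ be differentiable, let L : ℝⁿ × ℝᵖ → ℝ be twice continuously differentiable, and let x̂ : ℝᵖ → ℝⁿ be differentiable with ∇ₓ L(x̂(θ), θ) = 0 for all θ ∈ ℝᵖ. Define F(θ) = ℓ(x̂(θ)). Fix θ ∈ ℝᵖ and suppose H := D²ₓₓ L(x̂(θ), θ) is invertible. Then F is differentiable at θ with ∇F(θ) = − (D²_{θx} L(x̂(θ), θ))^T H^{-1} ∇ℓ(x̂(θ)); equivalently, ∇F(θ) = − (D²_{θx} L(x̂(θ), θ))^T w⋆ where w⋆ is the unique solution of the Hessian system H w⋆ = ∇ℓ(x̂(θ)). -/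

import Mathlib

open InnerProductSpace ContinuousLinearMap

section Aux

variable (F : Type*) [NormedAddCommGroup F] [InnerProductSpace ℝ F] [CompleteSpace F]

noncomputable def dualCLE : (F →L[ℝ] ℝ) ≃L[ℝ] F :=
  { toFun := fun T => (toDual ℝ F).symm T
    invFun := fun x => toDual ℝ F x
    map_add' := fun T S => by simp
    map_smul' := fun c T => by
      apply (toDual ℝ F).injective
      simp
    left_inv := fun T => by simp
    right_inv := fun x => by simp
    continuous_toFun := (toDual ℝ F).symm.continuous
    continuous_invFun := (toDual ℝ F).continuous }

variable {F}

lemma inner_dualCLE (T : F →L[ℝ] ℝ) (v : F) : ⟪dualCLE F T, v⟫_ℝ = T v := by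
  rw [show (dualCLE F T) = (toDual ℝ F).symm T from rfl, ← toDual_apply_apply,
    LinearIsometryEquiv.apply_symm_apply]

lemma gradient_eq_dualCLE (f : F → ℝ) (x : F) : gradient f x = dualCLE F (fderiv ℝ f x) := rfl

lemma inner_gradient_eq (f : F → ℝ) (x v : F) : ⟪gradient f x, v⟫_ℝ = fderiv ℝ f x v := by
  rw [gradient_eq_dualCLE, inner_dualCLE]

theorem hypergradient_aux {E P : Type*}
    [NormedAddCommGroup E] [InnerProductSpace ℝ E] [CompleteSpace E]
    [NormedAddCommGroup P] [InnerProductSpace ℝ P] [CompleteSpace P]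
    (ℓ : E → ℝ) (hℓ : Differentiable ℝ ℓ)
    (L : E × P → ℝ) (hL : ContDiff ℝ 2 L)
    (xhat : P → E) (hxhat : Differentiable ℝ xhat)
    (hcrit : ∀ θ, gradient (fun x => L (x, θ)) (xhat θ) = 0)
    (θ : P) (Hxx : E ≃L[ℝ] E)
    (hHxx : (Hxx : E →L[ℝ] E)
      = fderiv ℝ (fun x => gradient (fun x' => L (x', θ)) x) (xhat θ)) :
    DifferentiableAt ℝ (fun t => ℓ (xhat t)) θ ∧
    gradient (fun t => ℓ (xhat t)) θ
      = -(ContinuousLinearMap.adjoint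
            (fderiv ℝ (fun t => gradient (fun x' => L (x', t)) (xhat θ)) θ))
          (Hxx.symm (gradient ℓ (xhat θ))) ∧
    ∀ w : E, Hxx w = gradient ℓ (xhat θ) →
        gradient (fun t => ℓ (xhat t)) θ
          = -(ContinuousLinearMap.adjoint
                (fderiv ℝ (fun t => gradient (fun x' => L (x', t)) (xhat θ)) θ)) w := by
  set x₀ := xhat θ with hx₀
  have hLd : Differentiable ℝ L := hL.differentiable two_ne_zero
  have hL' : Differentiable ℝ (fderiv ℝ L) :=
    (hL.fderiv_right (m := 1) (by norm_num)).differentiable one_ne_zero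
  have hpart : ∀ (x : E) (t : P), fderiv ℝ (fun x' => L (x', t)) x
      = (fderiv ℝ L (x, t)).comp (inl ℝ E P) := fun x t =>
    ((hLd (x, t)).hasFDerivAt.comp x (hasFDerivAt_prodMk_left x t)).fderiv
  set g : E × P → E := fun q => dualCLE E ((fderiv ℝ L q).comp (inl ℝ E P)) with hgdef
  have hg : ∀ (x : E) (t : P), gradient (fun x' => L (x', t)) x = g (x, t) := fun x t => by
    rw [gradient_eq_dualCLE, hpart, hgdef]
  have hgdiff : Differentiable ℝ g := by
    apply ((dualCLE E).toContinuousLinearMap.differentiable).comp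
    exact hL'.clm_comp (differentiable_const _)
  set Dg := fderiv ℝ g (x₀, θ) with hDg
  have hgx : HasFDerivAt (fun x => g (x, θ)) (Dg.comp (inl ℝ E P)) x₀ :=
    (hgdiff _).hasFDerivAt.comp x₀ (hasFDerivAt_prodMk_left x₀ θ)
  have hgt : HasFDerivAt (fun t => g (x₀, t)) (Dg.comp (inr ℝ E P)) θ :=
    (hgdiff _).hasFDerivAt.comp θ (hasFDerivAt_prodMk_right x₀ θ)
  have e1 : (fun x => gradient (fun x' => L (x', θ)) x) = fun x => g (x, θ) :=
    funext fun x => hg x θ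
  have e2 : (fun t => gradient (fun x' => L (x', t)) x₀) = fun t => g (x₀, t) :=
    funext fun t => hg x₀ t
  have hHxx2 : (Hxx : E →L[ℝ] E) = Dg.comp (inl ℝ E P) := by
    rw [hHxx, e1, hgx.fderiv]
  set B := fderiv ℝ (fun t => gradient (fun x' => L (x', t)) x₀) θ with hBdef
  have hB : B = Dg.comp (inr ℝ E P) := by rw [hBdef, e2, hgt.fderiv]
  set A := fderiv ℝ xhat θ with hA
  have hcomp : HasFDerivAt (fun t => g (xhat t, t))
      (Dg.comp (A.prod (ContinuousLinearMap.id ℝ P))) θ :=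
    (hgdiff _).hasFDerivAt.comp θ ((hxhat θ).hasFDerivAt.prodMk (hasFDerivAt_id θ))
  have hzero : (fun t => g (xhat t, t)) = fun _ => (0 : E) :=
    funext fun t => by rw [← hg]; exact hcrit t
  have hDzero : Dg.comp (A.prod (ContinuousLinearMap.id ℝ P)) = 0 := by
    rw [← hcomp.fderiv, hzero]; exact fderiv_const_apply 0
  have hAv : ∀ v : P, A v = -Hxx.symm (B v) := by
    intro v
    have h0 : Dg (A v, v) = 0 := by
      have := congrArg (fun (T : P →L[ℝ] E) => T v) hDzero
      simpa using this
    have hsplit : ((A v, v) : E × P) = (inl ℝ E P) (A v) + (inr ℝ E P) v := by simp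
    have h1 : Hxx (A v) + B v = 0 := by
      have h2 : Dg ((inl ℝ E P) (A v)) + Dg ((inr ℝ E P) v) = 0 := by
        rw [← map_add, ← hsplit]; exact h0
      calc Hxx (A v) + B v
          = (Dg.comp (inl ℝ E P)) (A v) + (Dg.comp (inr ℝ E P)) v := by
            rw [← hHxx2, ← hB]; rfl
        _ = 0 := h2
    have h2 : Hxx (A v) = -(B v) := by
      have := h1
      linear_combination (norm := module) this
    calc A v = Hxx.symm (Hxx (A v)) := (Hxx.symm_apply_apply _).symm
      _ = Hxx.symm (-(B v)) := by rw [h2]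
      _ = -Hxx.symm (B v) := by simp
  -- symmetry of the Hessian
  have hf2 : ContDiff ℝ 2 (fun x : E => L (x, θ)) := hL.comp (contDiff_id.prodMk contDiff_const)
  set S := fderiv ℝ (fderiv ℝ (fun x : E => L (x, θ))) x₀ with hS
  have hsndsymm : ∀ u v : E, S u v = S v u := hf2.contDiffAt.isSymmSndFDerivAt (by simp [minSmoothness_of_isRCLikeNormedField])
  have hHS : (Hxx : E →L[ℝ] E) = ((dualCLE E : (E →L[ℝ] ℝ) ≃L[ℝ] E) :
      (E →L[ℝ] ℝ) →L[ℝ] E).comp S := by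
    rw [hHxx]
    have h3 : (fun x => gradient (fun x' => L (x', θ)) x)
        = (dualCLE E) ∘ (fderiv ℝ (fun x : E => L (x, θ))) := by
      funext x; exact gradient_eq_dualCLE _ x
    rw [h3, ContinuousLinearEquiv.comp_fderiv, hS]
  have hinnerH : ∀ u v : E, ⟪Hxx u, v⟫_ℝ = S u v := by
    intro u v
    have h4 : Hxx u = dualCLE E (S u) := by
      calc Hxx u = (Hxx : E →L[ℝ] E) u := rfl
        _ = dualCLE E (S u) := by rw [hHS]; rfl
    rw [h4, inner_dualCLE]
  have hsym : ∀ u v : E, ⟪Hxx u, v⟫_ℝ = ⟪u, Hxx v⟫_ℝ := by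
    intro u v
    rw [hinnerH, hsndsymm, ← hinnerH, real_inner_comm]
  have hsymm' : ∀ G w : E, ⟪G, Hxx.symm w⟫_ℝ = ⟪Hxx.symm G, w⟫_ℝ := by
    intro G w
    conv_lhs => rw [← Hxx.apply_symm_apply G]
    rw [hsym, Hxx.apply_symm_apply]
  have hFdiff : DifferentiableAt ℝ (fun t => ℓ (xhat t)) θ := (hℓ x₀).comp θ (hxhat θ)
  have hFfd : HasFDerivAt (fun t => ℓ (xhat t)) ((fderiv ℝ ℓ x₀).comp A) θ :=
    (hℓ x₀).hasFDerivAt.comp θ (hxhat θ).hasFDerivAt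
  have hmain : gradient (fun t => ℓ (xhat t)) θ
      = -(ContinuousLinearMap.adjoint B) (Hxx.symm (gradient ℓ x₀)) := by
    apply ext_inner_right ℝ
    intro v
    have lhs : ⟪gradient (fun t => ℓ (xhat t)) θ, v⟫_ℝ = fderiv ℝ ℓ x₀ (A v) := by
      rw [inner_gradient_eq, hFfd.fderiv]; rfl
    rw [lhs]
    have h5 : fderiv ℝ ℓ x₀ (A v) = ⟪gradient ℓ x₀, A v⟫_ℝ := (inner_gradient_eq ℓ x₀ (A v)).symm
    rw [h5, hAv v, inner_neg_left, inner_neg_right, hsymm',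
      ← ContinuousLinearMap.adjoint_inner_left]
  refine ⟨hFdiff, hmain, ?_⟩
  intro w hw
  have h6 : w = Hxx.symm (gradient ℓ x₀) := by rw [← hw, Hxx.symm_apply_apply]
  rw [h6]; exact hmain

end Aux


/-- **Hypergradient formula.** Let `ℓ : ℝⁿ → ℝ` be differentiable, `L : ℝⁿ × ℝᵖ → ℝ` twice
continuously differentiable, and `x̂ : ℝᵖ → ℝⁿ` differentiable with `∇ₓ L(x̂(θ), θ) = 0`
for all `θ`. Define `F(θ) = ℓ(x̂(θ))`. Fix `θ` and suppose the Hessian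
`H := D²ₓₓ L(x̂(θ), θ)` is invertible, witnessed by a continuous linear equivalence `Hxx`.
Then `F` is differentiable at `θ` and
`∇F(θ) = − (D²_{θx} L(x̂(θ), θ))ᵀ H⁻¹ ∇ℓ(x̂(θ))`; equivalently,
`∇F(θ) = − (D²_{θx} L(x̂(θ), θ))ᵀ w⋆` for the unique solution `w⋆` of `H w⋆ = ∇ℓ(x̂(θ))`.
(The transpose is the adjoint with respect to the Euclidean inner products.) -/
theorem hypergradient_formula (n p : ℕ)
    (ℓ : EuclideanSpace ℝ (Fin n) → ℝ) (hℓ : Differentiable ℝ ℓ)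
    (L : EuclideanSpace ℝ (Fin n) × EuclideanSpace ℝ (Fin p) → ℝ)
    (hL : ContDiff ℝ 2 L)
    (xhat : EuclideanSpace ℝ (Fin p) → EuclideanSpace ℝ (Fin n))
    (hxhat : Differentiable ℝ xhat)
    (hcrit : ∀ θ, gradient (fun x => L (x, θ)) (xhat θ) = 0)
    (θ : EuclideanSpace ℝ (Fin p))
    (Hxx : EuclideanSpace ℝ (Fin n) ≃L[ℝ] EuclideanSpace ℝ (Fin n))
    (hHxx : (Hxx : EuclideanSpace ℝ (Fin n) →L[ℝ] EuclideanSpace ℝ (Fin n))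
      = fderiv ℝ (fun x => gradient (fun x' => L (x', θ)) x) (xhat θ)) :
    DifferentiableAt ℝ (fun t => ℓ (xhat t)) θ ∧
    gradient (fun t => ℓ (xhat t)) θ
      = -(ContinuousLinearMap.adjoint
            (fderiv ℝ (fun t => gradient (fun x' => L (x', t)) (xhat θ)) θ))
          (Hxx.symm (gradient ℓ (xhat θ))) ∧
    ∀ w : EuclideanSpace ℝ (Fin n),
      Hxx w = gradient ℓ (xhat θ) →
        gradient (fun t => ℓ (xhat t)) θ
          = -(ContinuousLinearMap.adjoint
                (fderiv ℝ (fun t => gradient (fun x' => L (x', t)) (xhat θ)) θ)) w := by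
  exact hypergradient_aux ℓ hℓ L hL xhat hxhat hcrit θ Hxx hHxx
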